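/- arXiv:math/0602106 — 5 statements merged into one kernel-verified Lean document; each statement's English description precedes it below -/
import Mathlib

section
/- Let f ⊆ k be a Galois field extension of degree d, and let M ⊆ ℕ be the additive submonoid generated by the prime divisors of d. If α ∈ f[t] is a polynomial of degree n that splits in k[t] and n ∉ M, then α has a root in f. -/
open Polynomial

private lemma aux_dvd_mem {d m : ℕ} (hm : m ∣ d) (h2 : 2 ≤ m) :
    m ∈ AddSubmonoid.closure {p : ℕ | p.Prime ∧ p ∣ d} := by
  obtain ⟨p, hp, hpm⟩ := Nat.exists_prime_and_dvd (by omega : m ≠ 1)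
  obtain ⟨c, rfl⟩ := hpm
  have hpmem : p ∈ AddSubmonoid.closure {p : ℕ | p.Prime ∧ p ∣ d} :=
    AddSubmonoid.subset_closure (Set.mem_setOf.mpr ⟨hp, dvd_trans ⟨c, rfl⟩ hm⟩)
  have : p * c = c • p := by rw [smul_eq_mul, mul_comm]
  rw [this]
  exact AddSubmonoid.nsmul_mem _ hpmem c

private lemma aux_main {f k : Type*} [Field f] [Field k] [Algebra f k]
    [FiniteDimensional f k] [IsGalois f k] :
    ∀ n : ℕ, ∀ α : Polynomial f, α.natDegree ≤ n →
    (α.map (algebraMap f k)).Splits →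
    α.natDegree ∉
      AddSubmonoid.closure {p : ℕ | p.Prime ∧ p ∣ Module.finrank f k} →
    ∃ r : f, α.IsRoot r := by
  intro n
  induction n with
  | zero =>
    intro α hle _ hn
    exact absurd (by simpa [Nat.le_zero.mp hle] using (AddSubmonoid.zero_mem _)) hn
  | succ n ih =>
    intro α hle hsplit hn
    have hdeg0 : α.natDegree ≠ 0 := fun h => hn (h ▸ AddSubmonoid.zero_mem _)
    have hα0 : α ≠ 0 := fun h => hdeg0 (by simp [h])
    have hαu : ¬ IsUnit α := fun h => hdeg0 (natDegree_eq_zero_of_isUnit h)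
    obtain ⟨p, hpirr, hpdvd⟩ :=
      WfDvdMonoid.exists_irreducible_factor hαu hα0
    obtain ⟨q, rfl⟩ := hpdvd
    have hp0 : p ≠ 0 := hpirr.ne_zero
    have hq0 : q ≠ 0 := fun h => hα0 (by simp [h])
    have hpsplit : (p.map (algebraMap f k)).Splits :=
      ((splits_mul (Polynomial.map_ne_zero hp0) (Polynomial.map_ne_zero hq0)).mp
        (by rw [← Polynomial.map_mul]; exact hsplit)).1
    have hqsplit : (q.map (algebraMap f k)).Splits :=
      ((splits_mul (Polynomial.map_ne_zero hp0) (Polynomial.map_ne_zero hq0)).mp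
        (by rw [← Polynomial.map_mul]; exact hsplit)).2
    have hppos : 0 < p.natDegree := hpirr.natDegree_pos
    have hdsum : (p * q).natDegree = p.natDegree + q.natDegree :=
      natDegree_mul hp0 hq0
    by_cases hp1 : p.natDegree = 1
    · -- p has a root in f
      obtain ⟨r, hr⟩ := Splits.exists_eval_eq_zero
        (Splits.of_natDegree_le_one hp1.le)
        (fun h => by simp [natDegree_eq_zero_iff_degree_le_zero.mpr h.le] at hp1)
      refine ⟨r, IsRoot.dvd ?_ (Dvd.intro q rfl)⟩
      simpa using hr
    · -- p.natDegree ≥ 2, so it lies in the monoid; recurse on q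
      -- p has a root in k
      obtain ⟨x, hx⟩ := Splits.exists_eval_eq_zero hpsplit
        (by rw [degree_map]; exact fun h => by simp [natDegree_eq_zero_iff_degree_le_zero.mpr h.le] at hppos)
      have hint : IsIntegral f x := Algebra.IsIntegral.isIntegral x
      have hmindvd : minpoly f x ∣ p := minpoly.dvd f x (by simpa [aeval_def, eval_map] using hx)
      have hassoc : Associated (minpoly f x) p :=
        (minpoly.irreducible hint).associated_of_dvd hpirr hmindvd
      have hdeq : p.natDegree = (minpoly f x).natDegree :=
        Nat.le_antisymm
          (Polynomial.natDegree_le_of_dvd hassoc.symm.dvd (minpoly.ne_zero hint))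
          (Polynomial.natDegree_le_of_dvd hassoc.dvd hp0)
      have hpdvdrank : p.natDegree ∣ Module.finrank f k :=
        hdeq ▸ minpoly.degree_dvd hint
      have hpmem : p.natDegree ∈
          AddSubmonoid.closure {p : ℕ | p.Prime ∧ p ∣ Module.finrank f k} :=
        aux_dvd_mem hpdvdrank (by omega)
      have hqn : q.natDegree ∉
          AddSubmonoid.closure {p : ℕ | p.Prime ∧ p ∣ Module.finrank f k} := by
        intro hq
        exact hn (hdsum ▸ AddSubmonoid.add_mem _ hpmem hq)
      obtain ⟨r, hr⟩ := ih q (by omega) hqsplit hqn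
      exact ⟨r, IsRoot.dvd hr (Dvd.intro_left p rfl)⟩

theorem stmt_0 {f k : Type*} [Field f] [Field k] [Algebra f k]
    [FiniteDimensional f k] [IsGalois f k]
    (α : Polynomial f)
    (hsplit : (α.map (algebraMap f k)).Splits)
    (hn : α.natDegree ∉
      AddSubmonoid.closure {p : ℕ | p.Prime ∧ p ∣ Module.finrank f k}) :
    ∃ r : f, α.IsRoot r := by
  exact aux_main α.natDegree α le_rfl hsplit hn
end

section
/- Let f ⊆ k be a Galois extension of degree d and M the additive submonoid of ℕ generated by the primes dividing d. If α ∈ f[t] has degree n, splits in k[t], and n ∉ M, then the sum of the multiplicities of the roots of α lying in f is not in M (in particular it is positive). -/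
open Polynomial

lemma mem_closure_of_dvd {d m : ℕ} (hd : d ≠ 0) (hm : m ∣ d) (h2 : 2 ≤ m) :
    m ∈ AddSubmonoid.closure {p : ℕ | p.Prime ∧ p ∣ d} := by
  have hp : m.minFac.Prime := Nat.minFac_prime (by omega)
  have hpm : m.minFac ∣ m := Nat.minFac_dvd m
  have h : (m / m.minFac) • m.minFac = m := by
    rw [smul_eq_mul, Nat.div_mul_cancel hpm]
  rw [← h]
  exact (AddSubmonoid.closure _).nsmul_mem (AddSubmonoid.subset_closure (show m.minFac ∈ {p : ℕ | p.Prime ∧ p ∣ d} from ⟨hp, hpm.trans hm⟩)) _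

lemma aux_deg_mem {f k : Type*} [Field f] [Field k] [Algebra f k]
    [FiniteDimensional f k] :
    ∀ n (β : f[X]), β.natDegree = n → β ≠ 0 →
      (β.map (algebraMap f k)).Splits → β.roots = 0 →
      β.natDegree ∈ AddSubmonoid.closure {p : ℕ | p.Prime ∧ p ∣ Module.finrank f k} := by
  intro n
  induction n using Nat.strong_induction_on with
  | _ n ih =>
    intro β hdeg hβ0 hs hr
    rcases Nat.eq_zero_or_pos β.natDegree with h0 | hpos
    · rw [h0]; exact zero_mem _
    · have hnu : ¬ IsUnit β := fun h => by
        have := Polynomial.natDegree_eq_zero_of_isUnit h; omega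
      obtain ⟨q, hq, γ, hβ⟩ := WfDvdMonoid.exists_irreducible_factor hnu hβ0
      have hq0 : q ≠ 0 := hq.ne_zero
      have hγ0 : γ ≠ 0 := fun h => hβ0 (by rw [hβ, h, mul_zero])
      have hdmul : β.natDegree = q.natDegree + γ.natDegree := by
        rw [hβ, Polynomial.natDegree_mul hq0 hγ0]
      have hqdeg : 1 ≤ q.natDegree := hq.natDegree_pos
      -- q has a root in k
      have hqs : (q.map (algebraMap f k)).Splits :=
        hs.of_dvd (Polynomial.map_ne_zero hβ0) (Polynomial.map_dvd _ ⟨γ, hβ⟩)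
      obtain ⟨x, hx⟩ := hqs.exists_eval_eq_zero
        (by rw [Polynomial.degree_map, Polynomial.degree_eq_natDegree hq0]; exact_mod_cast (by omega : q.natDegree ≠ 0))
      have hint : IsIntegral f x := IsIntegral.of_finite f x
      have haev : Polynomial.aeval x q = 0 := by rwa [Polynomial.aeval_def, Polynomial.eval₂_eq_eval_map]
      have hmd : minpoly f x ∣ q := minpoly.dvd f x haev
      have hassoc : Associated (minpoly f x) q :=
        ((minpoly.irreducible hint).associated_of_dvd hq hmd)
      have hdq : q.natDegree = (minpoly f x).natDegree :=
        (Polynomial.natDegree_eq_of_degree_eq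
          (Polynomial.degree_eq_degree_of_associated hassoc)).symm
      have hdvd : q.natDegree ∣ Module.finrank f k := hdq ▸ minpoly.degree_dvd hint
      -- q has no roots in f, so natDegree q ≥ 2
      have hqroots : q.roots = 0 := by
        have := Polynomial.roots.le_of_dvd hβ0 ⟨γ, hβ⟩
        rw [hr] at this
        exact le_antisymm this bot_le
      have hq2 : 2 ≤ q.natDegree := by
        by_contra h
        have h1 : q.natDegree = 1 := by omega
        have hsp : q.Splits :=
          Polynomial.Splits.of_natDegree_le_one (by omega)
        have := (Polynomial.Splits.natDegree_eq_card_roots hsp)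
        rw [hqroots] at this
        simp [h1] at this
      have hdpos : Module.finrank f k ≠ 0 := Module.finrank_pos.ne'
      have hqmem := mem_closure_of_dvd hdpos hdvd hq2
      -- γ
      have hγmem : γ.natDegree ∈
          AddSubmonoid.closure {p : ℕ | p.Prime ∧ p ∣ Module.finrank f k} := by
        refine ih γ.natDegree (by omega) γ rfl hγ0
          (hs.of_dvd (Polynomial.map_ne_zero hβ0) (Polynomial.map_dvd _ ⟨q, by rw [hβ, mul_comm]⟩)) ?_
        have := Polynomial.roots.le_of_dvd hβ0 ⟨q, by rw [hβ, mul_comm]⟩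
        rw [hr] at this
        exact le_antisymm this bot_le
      rw [hdmul]
      exact add_mem hqmem hγmem

theorem stmt_1 {f k : Type*} [Field f] [Field k] [Algebra f k]
    [FiniteDimensional f k] [IsGalois f k]
    (α : Polynomial f)
    (hsplit : (α.map (algebraMap f k)).Splits)
    (hn : α.natDegree ∉
      AddSubmonoid.closure {p : ℕ | p.Prime ∧ p ∣ Module.finrank f k}) :
    Multiset.card α.roots ∉
      AddSubmonoid.closure {p : ℕ | p.Prime ∧ p ∣ Module.finrank f k} := by
  have hα0 : α ≠ 0 := by
    rintro rfl
    exact hn (by simp [zero_mem])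
  obtain ⟨β, hβ⟩ := α.prod_multiset_X_sub_C_dvd
  set P : f[X] := (α.roots.map fun a => X - C a).prod with hP
  have hP0 : P ≠ 0 := (monic_multiset_prod_of_monic _ _ fun a _ => monic_X_sub_C a).ne_zero
  have hβ0 : β ≠ 0 := fun h => hα0 (by rw [hβ, h, mul_zero])
  have hβroots : β.roots = 0 := by
    have : α.roots = α.roots + β.roots := by
      conv_lhs => rw [hβ]
      rw [Polynomial.roots_mul (hβ ▸ hα0), roots_multiset_prod_X_sub_C]
    exact left_eq_add.mp this
  have hdeg : α.natDegree = Multiset.card α.roots + β.natDegree := by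
    conv_lhs => rw [hβ]
    rw [Polynomial.natDegree_mul hP0 hβ0, natDegree_multiset_prod_X_sub_C_eq_card]
  have hβmem : β.natDegree ∈ AddSubmonoid.closure {p : ℕ | p.Prime ∧ p ∣ Module.finrank f k} :=
    aux_deg_mem _ β rfl hβ0
      (hsplit.of_dvd (Polynomial.map_ne_zero hα0) (Polynomial.map_dvd _ ⟨P, by rw [hβ, mul_comm]⟩)) hβroots
  intro hc
  exact hn (hdeg ▸ add_mem hc hβmem)
end

section
/- Let V be a finite-dimensional vector space over a field f, k a Galois extension of f, and M the additive submonoid of ℕ generated by the primes dividing [k : f]. Let g be a nilpotent Lie algebra of linear operators on V such that for each A ∈ g, the minimal polynomial π_A splits in k and is a power of an irreducible polynomial in f[t]. If dim V ∉ M, then for every A ∈ g there exists r_A ∈ f with π_A(t) = (t - r_A)^{m_A}. -/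
set_option maxHeartbeats 1000000

open Polynomial

attribute [local instance 100] LieRing.ofAssociativeRing

lemma aeval_restrict_coe {f V : Type*} [Field f] [AddCommGroup V] [Module f V]
    (A : Module.End f V) {W : Submodule f V} (hAW : ∀ x ∈ W, A x ∈ W)
    (r : Polynomial f) (w : W) :
    ((Polynomial.aeval (A.restrict hAW) r) w : V) = (Polynomial.aeval A r) w := by
  have hpow : ∀ (n : ℕ) (w : W), (((A.restrict hAW) ^ n) w : V) = (A ^ n) w := by
    intro n
    induction n with
    | zero => intro w; simp
    | succ n ih =>
        intro w
        rw [pow_succ, pow_succ]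
        simp only [Module.End.mul_apply]
        rw [ih, LinearMap.restrict_coe_apply]
  induction r using Polynomial.induction_on' with
  | add p q hp hq => simp [map_add, hp, hq]
  | monomial n c =>
      simp only [aeval_monomial, Module.End.mul_apply, Module.algebraMap_end_apply]
      rw [Submodule.coe_smul, hpow]

lemma aeval_mapQ {f V : Type*} [Field f] [AddCommGroup V] [Module f V]
    (A : Module.End f V) {W : Submodule f V} (hAW : W ≤ W.comap A)
    (r : Polynomial f) (x : V) :
    (Polynomial.aeval (Submodule.mapQ W W A hAW) r) (Submodule.Quotient.mk x) =
      Submodule.Quotient.mk ((Polynomial.aeval A r) x) := by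
  have hpow : ∀ (n : ℕ) (x : V),
      ((Submodule.mapQ W W A hAW) ^ n) (Submodule.Quotient.mk x) =
        Submodule.Quotient.mk ((A ^ n) x) := by
    intro n
    induction n with
    | zero => intro x; simp
    | succ n ih =>
        intro x
        rw [pow_succ, pow_succ]
        simp only [Module.End.mul_apply]
        rw [Submodule.mapQ_apply, ih]
  induction r using Polynomial.induction_on' with
  | add p q hp hq => simp [map_add, hp, hq]
  | monomial n c =>
      simp only [aeval_monomial, Module.End.mul_apply, Module.algebraMap_end_apply]
      rw [hpow, ← Submodule.Quotient.mk_smul]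

lemma L1 {f : Type*} [Field f] {V : Type*} [AddCommGroup V] [Module f V] [FiniteDimensional f V]
    {q : Polynomial f} (hq : Irreducible q) (A : Module.End f V)
    (h : Polynomial.aeval A q = 0) : q.natDegree ∣ Module.finrank f V := by
  rcases subsingleton_or_nontrivial V with hs | hn
  · simp [Module.finrank_zero_of_subsingleton]
  haveI : Fact (Irreducible q) := ⟨hq⟩
  set F := AdjoinRoot q
  let φ : F →ₐ[f] Module.End f V :=
    Ideal.Quotient.liftₐ (Ideal.span {q}) (Polynomial.aeval A) (by
      intro g hg
      obtain ⟨c, rfl⟩ := (Ideal.mem_span_singleton).mp hg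
      rw [map_mul, h, zero_mul])
  letI : Module F V := Module.compHom V (φ.toRingHom : F →+* Module.End f V)
  have hsmul : ∀ (x : F) (v : V), x • v = φ x v := fun _ _ => rfl
  letI : IsScalarTower f F V := by
    constructor
    intro c x v
    rw [hsmul, hsmul, map_smul, LinearMap.smul_apply]
  have hfd : FiniteDimensional f F := PowerBasis.finite (AdjoinRoot.powerBasis hq.ne_zero)
  have hrank : Module.finrank f F = q.natDegree := by
    rw [(AdjoinRoot.powerBasis hq.ne_zero).finrank]
    rfl
  have := Module.finrank_mul_finrank f F V
  rw [hrank] at this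
  exact ⟨Module.finrank F V, this.symm⟩

lemma L2 {f : Type*} [Field f] {q : Polynomial f} (hq : Irreducible q) :
    ∀ (m : ℕ) {V : Type*} [AddCommGroup V] [Module f V] [FiniteDimensional f V]
      (A : Module.End f V), Polynomial.aeval A (q ^ m) = 0 →
      q.natDegree ∣ Module.finrank f V := by
  intro m
  induction m with
  | zero =>
      intro V _ _ _ A h
      simp only [pow_zero, map_one] at h
      have h0 : ∀ v : V, v = 0 := by
        intro v
        have hv : (1 : Module.End f V) v = (0 : Module.End f V) v := by rw [h]
        simpa using hv
      have : Subsingleton V := ⟨fun a b => by rw [h0 a, h0 b]⟩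
      simp [Module.finrank_zero_of_subsingleton]
  | succ m ih =>
      intro V _ _ _ A h
      set N : Module.End f V := Polynomial.aeval A q with hN
      set W : Submodule f V := LinearMap.range N with hW
      have hcomm : N * A = A * N := by
        have h1 : N * A = Polynomial.aeval A (q * Polynomial.X) := by
          rw [map_mul, Polynomial.aeval_X, hN]
        have h2 : A * N = Polynomial.aeval A (Polynomial.X * q) := by
          rw [map_mul, Polynomial.aeval_X, hN]
        rw [h1, h2, mul_comm]
      have hAW : ∀ x ∈ W, A x ∈ W := by
        rintro x ⟨v, rfl⟩
        exact ⟨A v, by simpa using LinearMap.congr_fun hcomm v⟩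
      have hAW' : W ≤ W.comap A := fun x hx => hAW x hx
      -- restriction
      have h1 : Polynomial.aeval (A.restrict hAW) (q ^ m) = 0 := by
        apply LinearMap.ext
        rintro ⟨x, v, rfl⟩
        apply Subtype.ext
        rw [aeval_restrict_coe]
        show (Polynomial.aeval A (q ^ m)) ((Polynomial.aeval A q) v) = _
        rw [← Module.End.mul_apply, ← map_mul, ← pow_succ, h]
        simp
      -- quotient
      have h2 : Polynomial.aeval (Submodule.mapQ W W A hAW') q = 0 := by
        apply LinearMap.ext
        intro y
        obtain ⟨x, rfl⟩ := Submodule.Quotient.mk_surjective W y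
        rw [aeval_mapQ]
        rw [LinearMap.zero_apply, Submodule.Quotient.mk_eq_zero]
        exact ⟨x, rfl⟩
      have d1 := ih (A.restrict hAW) h1
      have d2 := L1 hq (Submodule.mapQ W W A hAW') h2
      have := Submodule.finrank_quotient_add_finrank W
      rw [← this]
      exact dvd_add d2 d1

theorem stmt_6 {f k V : Type*} [Field f] [Field k] [Algebra f k]
    [FiniteDimensional f k] [IsGalois f k]
    [AddCommGroup V] [Module f V] [FiniteDimensional f V]
    (hV : 0 < Module.finrank f V)
    (g : LieSubalgebra f (Module.End f V))
    [LieRing.IsNilpotent g]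
    (hsplit : ∀ A ∈ g, Polynomial.Splits ((minpoly f A).map (algebraMap f k)))
    (hprime : ∀ A ∈ g, ∃ (p : Polynomial f) (m : ℕ),
      Irreducible p ∧ minpoly f A = p ^ m)
    (hdim : Module.finrank f V ∉
      AddSubmonoid.closure {p : ℕ | p.Prime ∧ p ∣ Module.finrank f k}) :
    ∀ A ∈ g, ∃ (r : f) (m : ℕ),
      minpoly f A = (Polynomial.X - Polynomial.C r) ^ m := by
  intro A hA
  obtain ⟨p, m, hp, hmin⟩ := hprime A hA
  have hAint : IsIntegral f A := Algebra.IsIntegral.isIntegral (R := f) A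
  have hdeg1 : p.natDegree = 1 := by
    by_contra hne
    have hd0 : 0 < p.natDegree := hp.natDegree_pos
    have hd2 : 2 ≤ p.natDegree := by omega
    -- p has a root in k
    have hsplits : Polynomial.Splits (p.map (algebraMap f k)) := by
      have := hsplit A hA
      rw [hmin] at this
      rcases m with _ | m
      · -- m = 0 : minpoly = 1, contradiction
        exfalso
        have h1 : minpoly f A = 1 := by rw [hmin]; simp
        have := minpoly.aeval f A
        rw [h1] at this
        simp only [map_one] at this
        have : (1 : Module.End f V) = 0 := this
        have hnt : Nontrivial V := Module.nontrivial_of_finrank_pos hV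
        obtain ⟨v, hv⟩ := exists_ne (0 : V)
        apply hv
        calc v = (1 : Module.End f V) v := rfl
        _ = (0 : Module.End f V) v := by rw [this]
        _ = 0 := rfl
      · exact Polynomial.Splits.of_dvd this
          (Polynomial.map_ne_zero (pow_ne_zero _ hp.ne_zero))
          (Polynomial.map_dvd _ (dvd_pow_self p m.succ_ne_zero))
    have hpd : p.degree ≠ 0 := by
      rw [p.degree_eq_natDegree hp.ne_zero]
      simp only [ne_eq, Nat.cast_eq_zero]
      omega
    obtain ⟨α, hα⟩ := hsplits.exists_eval_eq_zero (by rwa [Polynomial.degree_map])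
    have hαint : IsIntegral f α := Algebra.IsIntegral.isIntegral α
    have hdvd : minpoly f α ∣ p := minpoly.dvd f α (by rwa [Polynomial.aeval_def, ← Polynomial.eval_map])
    have hassoc : Associated (minpoly f α) p :=
      (minpoly.irreducible hαint).associated_of_dvd hp hdvd
    have hdeq : (minpoly f α).natDegree = p.natDegree :=
      Polynomial.natDegree_eq_of_degree_eq (Polynomial.degree_eq_degree_of_associated hassoc)
    have hdvdk : p.natDegree ∣ Module.finrank f k := by
      rw [← hdeq]; exact minpoly.degree_dvd hαint
    -- p.natDegree divides finrank f V
    have hdvdV : p.natDegree ∣ Module.finrank f V := by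
      apply L2 hp m A
      rw [← hmin]
      exact minpoly.aeval f A
    -- least prime factor
    set ℓ := p.natDegree.minFac with hℓ
    have hℓp : ℓ.Prime := Nat.minFac_prime (by omega)
    have hℓd : ℓ ∣ p.natDegree := Nat.minFac_dvd _
    have hℓk : ℓ ∣ Module.finrank f k := hℓd.trans hdvdk
    have hℓV : ℓ ∣ Module.finrank f V := hℓd.trans hdvdV
    obtain ⟨c, hc⟩ := hℓV
    apply hdim
    have hmem : ℓ ∈ AddSubmonoid.closure {p : ℕ | p.Prime ∧ p ∣ Module.finrank f k} :=
      AddSubmonoid.subset_closure ⟨hℓp, hℓk⟩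
    rw [hc, mul_comm, ← smul_eq_mul]
    exact AddSubmonoid.nsmul_mem _ hmem c
  -- degree 1 case
  have hple : p.degree ≤ 1 := by
    rw [p.degree_eq_natDegree hp.ne_zero, hdeg1]
    exact le_refl _
  obtain ⟨a, b, hpe⟩ : ∃ a b : f, p = Polynomial.C a * Polynomial.X + Polynomial.C b :=
    ⟨p.coeff 1, p.coeff 0, Polynomial.eq_X_add_C_of_degree_le_one hple⟩
  have ha0 : a ≠ 0 := by
    intro h0
    rw [h0] at hpe
    simp only [map_zero, zero_mul, zero_add] at hpe
    rw [hpe] at hdeg1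
    simp at hdeg1
  refine ⟨-(b / a), m, ?_⟩
  have hfact : p = Polynomial.C a * (Polynomial.X - Polynomial.C (-(b / a))) := by
    rw [hpe, map_neg, sub_neg_eq_add, mul_add, ← Polynomial.C_mul,
      mul_div_cancel₀ _ ha0]
  have hmonic : (minpoly f A).Monic := minpoly.monic hAint
  have hlead : a ^ m = 1 := by
    have h1 : (minpoly f A).leadingCoeff = 1 := hmonic
    rw [hmin, hfact, mul_pow, Polynomial.leadingCoeff_mul, Polynomial.leadingCoeff_pow,
      Polynomial.leadingCoeff_pow, Polynomial.leadingCoeff_C,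
      (Polynomial.monic_X_sub_C (-(b / a))).leadingCoeff, one_pow, mul_one] at h1
    exact h1
  rw [hmin, hfact, mul_pow, ← Polynomial.C_pow, hlead, Polynomial.C_1, one_mul]
end

section
/- Let g be a nilpotent Lie algebra of linear operators on ℝ^n with n odd. Then g has a common eigenvector in ℝ^n. -/
open TensorProduct LieModule Module

noncomputable section AuxSect

/-- Conjugation on a complexified real vector space. -/
def cconj (W : Type*) [AddCommGroup W] [Module ℝ W] :
    ℂ ⊗[ℝ] W →ₗ[ℝ] ℂ ⊗[ℝ] W :=
  LinearMap.rTensor W (Complex.conjAe.toLinearMap : ℂ →ₗ[ℝ] ℂ)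

variable {W : Type*} [AddCommGroup W] [Module ℝ W]

@[simp] lemma cconj_tmul (a : ℂ) (w : W) :
    cconj W (a ⊗ₜ[ℝ] w) = (starRingEnd ℂ) a ⊗ₜ[ℝ] w := rfl

@[simp] lemma cconj_cconj (m : ℂ ⊗[ℝ] W) : cconj W (cconj W m) = m := by
  induction m with
  | zero => simp
  | tmul a w => simp
  | add x y hx hy => simp [map_add, hx, hy]

lemma cconj_involutive : Function.Involutive (cconj W) := fun m => cconj_cconj m

lemma cconj_injective : Function.Injective (cconj W) := cconj_involutive.injective

lemma cconj_smul (c : ℂ) (m : ℂ ⊗[ℝ] W) :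
    cconj W (c • m) = (starRingEnd ℂ) c • cconj W m := by
  induction m with
  | zero => simp
  | tmul a w => simp [smul_tmul', smul_eq_mul]
  | add x y hx hy => simp [smul_add, map_add, hx, hy]

/-- Real part map on a complexified real vector space. -/
def reT (W : Type*) [AddCommGroup W] [Module ℝ W] : ℂ ⊗[ℝ] W →ₗ[ℝ] W :=
  (TensorProduct.lid ℝ W).toLinearMap ∘ₗ LinearMap.rTensor W Complex.reLm

/-- Imaginary part map on a complexified real vector space. -/
def imT (W : Type*) [AddCommGroup W] [Module ℝ W] : ℂ ⊗[ℝ] W →ₗ[ℝ] W :=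
  (TensorProduct.lid ℝ W).toLinearMap ∘ₗ LinearMap.rTensor W Complex.imLm

@[simp] lemma reT_tmul (a : ℂ) (w : W) : reT W (a ⊗ₜ[ℝ] w) = a.re • w := by
  simp [reT]

@[simp] lemma imT_tmul (a : ℂ) (w : W) : imT W (a ⊗ₜ[ℝ] w) = a.im • w := by
  simp [imT]

lemma imT_cconj (m : ℂ ⊗[ℝ] W) : imT W (cconj W m) = - imT W m := by
  induction m with
  | zero => simp
  | tmul a w => simp
  | add x y hx hy => simp only [map_add, hx, hy, neg_add]

lemma tmul_decomp (m : ℂ ⊗[ℝ] W) :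
    m = (1 : ℂ) ⊗ₜ[ℝ] reT W m + Complex.I ⊗ₜ[ℝ] imT W m := by
  induction m with
  | zero => simp
  | tmul a w =>
      rw [reT_tmul, imT_tmul, tmul_smul, tmul_smul, smul_tmul', smul_tmul',
        ← TensorProduct.add_tmul]
      congr 1
      simp only [smul_eq_mul, mul_one, Complex.real_smul, Complex.coe_smul]
      exact (Complex.re_add_im a).symm
  | add x y hx hy =>
      conv_rhs => rw [map_add, map_add, TensorProduct.tmul_add, TensorProduct.tmul_add]
      conv_lhs => rw [hx, hy]
      abel

lemma eq_tmul_of_cconj_fixed {m : ℂ ⊗[ℝ] W} (h : cconj W m = m) :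
    m = (1 : ℂ) ⊗ₜ[ℝ] reT W m := by
  have him : imT W m = 0 := by
    have := imT_cconj m
    rw [h] at this
    have h2 : (2 : ℝ) • imT W m = 0 := by
      rw [two_smul]; nth_rewrite 1 [this]; simp
    simpa using (smul_eq_zero.mp h2).resolve_left (by norm_num)
  conv_lhs => rw [tmul_decomp m]
  rw [him]
  simp

section Lie

variable (Lr : Type*) [LieRing Lr] [LieAlgebra ℝ Lr]
variable (Vr : Type*) [AddCommGroup Vr] [Module ℝ Vr] [LieRingModule Lr Vr] [LieModule ℝ Lr Vr]

lemma bracketInst_eq :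
    LieAlgebra.ExtendScalars.instBracketTensorProduct ℝ ℂ Lr Vr =
      (LieRingModule.toBracket : Bracket (ℂ ⊗[ℝ] Lr) (ℂ ⊗[ℝ] Vr)) := rfl

lemma cconj_lie (x : ℂ ⊗[ℝ] Lr) (m : ℂ ⊗[ℝ] Vr) :
    cconj Vr (⁅x, m⁆ : ℂ ⊗[ℝ] Vr) = ⁅cconj Lr x, cconj Vr m⁆ := by
  rw [bracketInst_eq Lr Vr]
  induction x with
  | zero => rw [zero_lie, map_zero, map_zero, zero_lie]
  | add x1 x2 h1 h2 => rw [add_lie, map_add, map_add, h1, h2, add_lie]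
  | tmul a A =>
    induction m with
    | zero => simp only [lie_zero, map_zero]
    | add m1 m2 h1 h2 => rw [lie_add, map_add, map_add, h1, h2, lie_add]
    | tmul b v =>
        have e1 : (⁅a ⊗ₜ[ℝ] A, b ⊗ₜ[ℝ] v⁆ : ℂ ⊗[ℝ] Vr) = (a * b) ⊗ₜ[ℝ] ⁅A, v⁆ := rfl
        have e2 : (⁅(starRingEnd ℂ) a ⊗ₜ[ℝ] A, (starRingEnd ℂ) b ⊗ₜ[ℝ] v⁆ : ℂ ⊗[ℝ] Vr) =
            ((starRingEnd ℂ) a * (starRingEnd ℂ) b) ⊗ₜ[ℝ] ⁅A, v⁆ := rfl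
        rw [cconj_tmul, cconj_tmul, e1, cconj_tmul, e2, map_mul]

lemma cconj_toEnd (x : ℂ ⊗[ℝ] Lr) (m : ℂ ⊗[ℝ] Vr) :
    cconj Vr (toEnd ℂ (ℂ ⊗[ℝ] Lr) (ℂ ⊗[ℝ] Vr) x m) =
      toEnd ℂ (ℂ ⊗[ℝ] Lr) (ℂ ⊗[ℝ] Vr) (cconj Lr x) (cconj Vr m) :=
  cconj_lie Lr Vr x m

variable [LieRing.IsNilpotent Lr]

example : LieRing.IsNilpotent (ℂ ⊗[ℝ] Lr) := inferInstance

lemma cconj_pow_shift (χ : (ℂ ⊗[ℝ] Lr) → ℂ) (x : ℂ ⊗[ℝ] Lr) (k : ℕ) (m : ℂ ⊗[ℝ] Vr) :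
    cconj Vr (((toEnd ℂ (ℂ ⊗[ℝ] Lr) (ℂ ⊗[ℝ] Vr) x - χ x • 1) ^ k) m) =
      ((toEnd ℂ (ℂ ⊗[ℝ] Lr) (ℂ ⊗[ℝ] Vr) (cconj Lr x) -
        (starRingEnd ℂ) (χ x) • 1) ^ k) (cconj Vr m) := by
  induction k generalizing m with
  | zero => simp
  | succ k ih =>
      rw [pow_succ, pow_succ]
      rw [Module.End.mul_apply, Module.End.mul_apply, ih]
      congr 1
      simp only [LinearMap.sub_apply, LinearMap.smul_apply, Module.End.one_apply,
        toEnd_apply_apply, map_sub, cconj_smul, cconj_lie]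

lemma cconj_mem_genWeightSpace {χ : (ℂ ⊗[ℝ] Lr) → ℂ} {m : ℂ ⊗[ℝ] Vr}
    (hm : m ∈ genWeightSpace (ℂ ⊗[ℝ] Vr) χ) :
    cconj Vr m ∈ genWeightSpace (ℂ ⊗[ℝ] Vr)
      (fun x => (starRingEnd ℂ) (χ (cconj Lr x))) := by
  rw [mem_genWeightSpace] at hm ⊢
  intro x
  obtain ⟨k, hk⟩ := hm (cconj Lr x)
  refine ⟨k, ?_⟩
  have := cconj_pow_shift Lr Vr χ (cconj Lr x) k m
  rw [hk, map_zero, cconj_cconj] at this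
  exact this.symm

/-- The conjugate of a weight of the complexified Lie algebra. -/
def conjWeight (χ : Weight ℂ (ℂ ⊗[ℝ] Lr) (ℂ ⊗[ℝ] Vr)) :
    Weight ℂ (ℂ ⊗[ℝ] Lr) (ℂ ⊗[ℝ] Vr) where
  toFun := fun x => (starRingEnd ℂ) (χ (cconj Lr x))
  genWeightSpace_ne_bot' := by
    obtain ⟨m, hm, hm0⟩ := χ.exists_ne_zero
    intro hbot
    have hmem := cconj_mem_genWeightSpace Lr Vr (χ := ⇑χ) hm
    rw [hbot] at hmem
    rw [LieSubmodule.mem_bot] at hmem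
    exact hm0 (cconj_injective (by simpa using hmem))

@[simp] lemma conjWeight_apply (χ : Weight ℂ (ℂ ⊗[ℝ] Lr) (ℂ ⊗[ℝ] Vr)) (x : ℂ ⊗[ℝ] Lr) :
    conjWeight Lr Vr χ x = (starRingEnd ℂ) (χ (cconj Lr x)) := rfl

lemma conjWeight_conjWeight (χ : Weight ℂ (ℂ ⊗[ℝ] Lr) (ℂ ⊗[ℝ] Vr)) :
    conjWeight Lr Vr (conjWeight Lr Vr χ) = χ := by
  ext x
  simp

lemma mem_genWeightSpace_conjWeight {χ : Weight ℂ (ℂ ⊗[ℝ] Lr) (ℂ ⊗[ℝ] Vr)}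
    {m : ℂ ⊗[ℝ] Vr} (hm : m ∈ genWeightSpace (ℂ ⊗[ℝ] Vr) χ) :
    cconj Vr m ∈ genWeightSpace (ℂ ⊗[ℝ] Vr) (conjWeight Lr Vr χ) :=
  cconj_mem_genWeightSpace Lr Vr hm

lemma finrank_genWeightSpace_conjWeight (χ : Weight ℂ (ℂ ⊗[ℝ] Lr) (ℂ ⊗[ℝ] Vr)) :
    finrank ℂ (genWeightSpace (ℂ ⊗[ℝ] Vr) (conjWeight Lr Vr χ)) =
      finrank ℂ (genWeightSpace (ℂ ⊗[ℝ] Vr) χ) := by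
  let W₁ := genWeightSpace (ℂ ⊗[ℝ] Vr) (⇑χ)
  let W₂ := genWeightSpace (ℂ ⊗[ℝ] Vr) (⇑(conjWeight Lr Vr χ))
  have hmap₁ : ∀ m ∈ W₁, cconj Vr m ∈ W₂ := fun m hm =>
    mem_genWeightSpace_conjWeight Lr Vr hm
  have hmap₂ : ∀ m ∈ W₂, cconj Vr m ∈ W₁ := by
    intro m hm
    have := mem_genWeightSpace_conjWeight Lr Vr hm
    rwa [conjWeight_conjWeight] at this
  let f : W₁ →ₗ[ℝ] W₂ :=
    { toFun := fun m => ⟨cconj Vr m.1, hmap₁ m.1 m.2⟩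
      map_add' := fun x y => Subtype.ext (by simp)
      map_smul' := fun r x => Subtype.ext (by
        simp only [RingHom.id_apply]
        show cconj Vr ((r : ℝ) • (x : ℂ ⊗[ℝ] Vr)) = (r : ℝ) • cconj Vr (x : ℂ ⊗[ℝ] Vr)
        exact (cconj Vr).map_smul r _) }
  have hbij : Function.Bijective f := by
    constructor
    · intro x y hxy
      exact Subtype.ext (cconj_injective (congrArg Subtype.val hxy))
    · rintro ⟨w, hw⟩
      exact ⟨⟨cconj Vr w, hmap₂ w hw⟩, Subtype.ext (cconj_cconj w)⟩
  have he : finrank ℝ W₁ = finrank ℝ W₂ := (LinearEquiv.ofBijective f hbij).finrank_eq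
  have h₁ : finrank ℝ ℂ * finrank ℂ W₁ = finrank ℝ W₁ := Module.finrank_mul_finrank ℝ ℂ W₁
  have h₂ : finrank ℝ ℂ * finrank ℂ W₂ = finrank ℝ W₂ := Module.finrank_mul_finrank ℝ ℂ W₂
  rw [Complex.finrank_real_complex] at h₁ h₂
  have : 2 * finrank ℂ W₁ = 2 * finrank ℂ W₂ := by rw [h₁, h₂, he]
  exact (Nat.eq_of_mul_eq_mul_left (by norm_num) this).symm

set_option synthInstance.maxHeartbeats 1000000 in
set_option maxHeartbeats 2000000 in
lemma exists_selfconj_weight [FiniteDimensional ℝ Vr] (hodd : Odd (finrank ℝ Vr)) :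
    ∃ χ : Weight ℂ (ℂ ⊗[ℝ] Lr) (ℂ ⊗[ℝ] Vr), conjWeight Lr Vr χ = χ := by
  classical
  haveI hMfin : Module.Finite ℂ (ℂ ⊗[ℝ] Vr) := inferInstance
  have hn : finrank ℂ (ℂ ⊗[ℝ] Vr) = finrank ℝ Vr := Module.finrank_baseChange
  have hds := DirectSum.isInternal_submodule_of_iSupIndep_of_iSup_eq_top
    (LieSubmodule.iSupIndep_toSubmodule.mpr <|
      iSupIndep_genWeightSpace' ℂ (ℂ ⊗[ℝ] Lr) (ℂ ⊗[ℝ] Vr))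
    (LieSubmodule.iSup_toSubmodule_eq_top.mpr <|
      iSup_genWeightSpace_eq_top' ℂ (ℂ ⊗[ℝ] Lr) (ℂ ⊗[ℝ] Vr))
  letI : Fintype (Weight ℂ (ℂ ⊗[ℝ] Lr) (ℂ ⊗[ℝ] Vr)) := Fintype.ofFinite _
  have hsum : finrank ℂ (ℂ ⊗[ℝ] Vr) =
      ∑ χ : Weight ℂ (ℂ ⊗[ℝ] Lr) (ℂ ⊗[ℝ] Vr),
        finrank ℂ (genWeightSpace (ℂ ⊗[ℝ] Vr) χ) := by
    rw [← Module.finrank_directSum]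
    exact (LinearEquiv.ofBijective (DirectSum.coeLinearMap _) hds).finrank_eq.symm
  by_contra hcon
  push_neg at hcon
  have hzero : ((finrank ℝ Vr : ℕ) : ZMod 2) = 0 := by
    rw [← hn, hsum, Nat.cast_sum]
    refine Finset.sum_ninvolution (conjWeight Lr Vr) ?_ ?_ (fun _ => Finset.mem_univ _)
      (conjWeight_conjWeight Lr Vr)
    · intro χ
      rw [finrank_genWeightSpace_conjWeight]
      exact CharTwo.add_self_eq_zero _
    · intro χ _
      exact hcon χ
  obtain ⟨k, hk⟩ := hodd
  rw [hk] at hzero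
  push_cast at hzero
  rw [show ((2 : ZMod 2)) = 0 by decide] at hzero
  simp at hzero

end Lie

end AuxSect

attribute [local instance 100] LieRing.ofAssociativeRing

set_option maxHeartbeats 2000000 in
set_option synthInstance.maxHeartbeats 1000000 in
theorem stmt_9 {n : ℕ} (hn : Odd n)
    (g : LieSubalgebra ℝ (Module.End ℝ (Fin n → ℝ)))
    [LieRing.IsNilpotent g] :
    ∃ u : Fin n → ℝ, u ≠ 0 ∧ ∀ A ∈ g, ∃ c : ℝ, A u = c • u := by
  classical
  set V := (Fin n → ℝ)
  have hodd : Odd (finrank ℝ V) := by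
    rwa [Module.finrank_fin_fun]
  obtain ⟨χ, hfix⟩ := exists_selfconj_weight (↥g) V hodd
  have happ : ∀ y, (starRingEnd ℂ) (χ (cconj (↥g) y)) = χ y := by
    intro y
    conv_rhs => rw [← hfix]
    rfl
  obtain ⟨m, hm0, hmb⟩ := exists_forall_lie_eq_smul ℂ (ℂ ⊗[ℝ] ↥g) (ℂ ⊗[ℝ] V) χ
  have hm : ∀ x, toEnd ℂ (ℂ ⊗[ℝ] ↥g) (ℂ ⊗[ℝ] V) x m = χ x • m := by
    intro x; rw [toEnd_apply_apply]; exact hmb x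
  have hcc : ∀ x, toEnd ℂ (ℂ ⊗[ℝ] ↥g) (ℂ ⊗[ℝ] V) x (cconj V m) = χ x • cconj V m := by
    intro x
    have h1 : toEnd ℂ (ℂ ⊗[ℝ] ↥g) (ℂ ⊗[ℝ] V) x (cconj V m) =
        cconj V (toEnd ℂ (ℂ ⊗[ℝ] ↥g) (ℂ ⊗[ℝ] V) (cconj (↥g) x) m) := by
      rw [cconj_toEnd, cconj_cconj]
    rw [h1, hm (cconj (↥g) x), cconj_smul, happ x]
  have key : ∀ w : ℂ ⊗[ℝ] V, w ≠ 0 → cconj V w = w →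
      (∀ x, toEnd ℂ (ℂ ⊗[ℝ] ↥g) (ℂ ⊗[ℝ] V) x w = χ x • w) →
      ∃ u : Fin n → ℝ, u ≠ 0 ∧ ∀ A ∈ g, ∃ c : ℝ, A u = c • u := by
    intro w hw0 hwfix hweig
    set u := reT V w with hu_def
    have hw : w = (1 : ℂ) ⊗ₜ[ℝ] u := eq_tmul_of_cconj_fixed hwfix
    refine ⟨u, fun hu => hw0 (by rw [hw, hu, TensorProduct.tmul_zero]), ?_⟩
    intro A hA
    set x : ℂ ⊗[ℝ] ↥g := (1 : ℂ) ⊗ₜ[ℝ] (⟨A, hA⟩ : ↥g) with hx_def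
    have hx : cconj (↥g) x = x := by
      rw [hx_def, cconj_tmul, map_one]
    have hreal : (starRingEnd ℂ) (χ x) = χ x := by
      conv_lhs => rw [← hx]
      exact happ x
    have hre : ((χ x).re : ℂ) = χ x := Complex.conj_eq_iff_re.mp hreal
    refine ⟨(χ x).re, ?_⟩
    have heig := hweig x
    rw [hw] at heig
    have hbr : toEnd ℂ (ℂ ⊗[ℝ] ↥g) (ℂ ⊗[ℝ] V) x ((1 : ℂ) ⊗ₜ[ℝ] u) =
        (1 : ℂ) ⊗ₜ[ℝ] (A u) := by
      have e1 : toEnd ℂ (ℂ ⊗[ℝ] ↥g) (ℂ ⊗[ℝ] V) x ((1 : ℂ) ⊗ₜ[ℝ] u) =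
          ((1 : ℂ) * 1) ⊗ₜ[ℝ] ⁅(⟨A, hA⟩ : ↥g), u⁆ := rfl
      rw [e1, one_mul]
      rfl
    rw [hbr] at heig
    have hr : χ x • ((1 : ℂ) ⊗ₜ[ℝ] u : ℂ ⊗[ℝ] V) = (1 : ℂ) ⊗ₜ[ℝ] ((χ x).re • u) := by
      rw [TensorProduct.tmul_smul,
        ← algebraMap_smul ℂ ((χ x).re) ((1 : ℂ) ⊗ₜ[ℝ] u : ℂ ⊗[ℝ] V),
        show (algebraMap ℝ ℂ) (χ x).re = ((χ x).re : ℂ) from rfl, hre]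
    rw [hr] at heig
    have := congrArg (reT V) heig
    simpa using this
  by_cases h1 : m + cconj V m ≠ 0
  · refine key _ h1 ?_ ?_
    · rw [map_add, cconj_cconj, add_comm]
    · intro x
      rw [map_add, hm x, hcc x, ← smul_add]
  · push_neg at h1
    have hmconj : cconj V m = -m := eq_neg_of_add_eq_zero_right h1
    have hIfix : cconj V (Complex.I • m) = Complex.I • m := by
      rw [cconj_smul, hmconj, Complex.conj_I]
      simp
    have h2 : Complex.I • m + cconj V (Complex.I • m) ≠ 0 := by
      rw [hIfix]
      intro hz
      apply hm0
      have h2m : (2 : ℂ) • (Complex.I • m) = 0 := by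
        rw [two_smul]; exact hz
      have hIm : Complex.I • m = 0 := by
        rcases smul_eq_zero.mp h2m with h | h
        · norm_num at h
        · exact h
      rcases smul_eq_zero.mp hIm with h | h
      · exact absurd h Complex.I_ne_zero
      · exact h
    refine key _ h2 ?_ ?_
    · rw [map_add, cconj_cconj, add_comm]
    · intro x
      rw [hIfix, map_add, map_smul, hm x]
      rw [smul_comm Complex.I (χ x) m, ← smul_add]
end

section
/- Let V be a finite-dimensional real vector space and g a nilpotent Lie algebra of linear operators on V preserving a direct sum decomposition V = W_1 ⊕ ⋯ ⊕ W_m. Let V' be the span of all common eigenvectors of g in V. Then dim V' is at least the number of indices i for which dim W_i is odd. -/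
open Polynomial Module

lemma even_natDegree_of_no_root : ∀ (n : ℕ) (p : ℝ[X]), p.natDegree = n → p ≠ 0 →
    (∀ x : ℝ, ¬ p.IsRoot x) → Even p.natDegree := by
  intro n
  induction n using Nat.strong_induction_on with
  | _ n IH =>
    intro p hn hp hroot
    rcases Nat.even_or_odd p.natDegree with he | ho
    · exact he
    exfalso
    have hdeg : 0 < p.natDegree := ho.pos
    obtain ⟨i, hi, hidvd⟩ := WfDvdMonoid.exists_irreducible_factor
      (Polynomial.not_isUnit_of_natDegree_pos p hdeg) hp
    obtain ⟨q, hq⟩ := hidvd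
    have hi2 : i.natDegree ≤ 2 := hi.natDegree_le_two
    have hi1 : 0 < i.natDegree := hi.natDegree_pos
    have hinoroot : ∀ x : ℝ, ¬ i.IsRoot x := by
      intro x hx
      exact hroot x (hx.dvd ⟨q, hq⟩)
    have hi_ne_one : i.natDegree ≠ 1 := by
      intro h1
      obtain ⟨a, b, hab⟩ : ∃ a b : ℝ, i = C a * X + C b :=
        ⟨i.coeff 1, i.coeff 0, Polynomial.eq_X_add_C_of_natDegree_le_one (by omega)⟩
      have hc1 : a ≠ 0 := by
        rintro rfl
        rw [C_0, zero_mul, zero_add] at hab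
        rw [hab, natDegree_C] at h1
        exact one_ne_zero h1.symm
      exact hinoroot (-b / a) (by
        rw [IsRoot.def, hab]
        simp only [eval_add, eval_mul, eval_C, eval_X]
        field_simp
        ring)
    have hi2' : i.natDegree = 2 := by omega
    have hq0 : q ≠ 0 := by rintro rfl; simp [hq] at hp
    have hi0 : i ≠ 0 := hi.ne_zero
    have hqroot : ∀ x : ℝ, ¬ q.IsRoot x := by
      intro x hx
      exact hroot x (hx.dvd ⟨i, by rw [hq, mul_comm]⟩)
    have hdq : p.natDegree = 2 + q.natDegree := by
      rw [hq, Polynomial.natDegree_mul hi0 hq0, hi2']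
    have hql : q.natDegree < n := by omega
    have := IH q.natDegree (by omega) q rfl hq0 hqroot
    rw [hn] at ho
    rw [← hn] at ho
    rcases this with ⟨k, hk⟩
    rcases ho with ⟨j, hj⟩
    omega

lemma odd_card_roots (p : ℝ[X]) (hp : p ≠ 0) (h : Odd p.natDegree) :
    Odd (Multiset.card p.roots) := by
  obtain ⟨q, hq⟩ := p.prod_multiset_X_sub_C_dvd
  set r : ℝ[X] := (p.roots.map fun a => X - C a).prod with hr
  have hrmonic : r.Monic := monic_multiset_prod_of_monic _ _ (fun a _ => monic_X_sub_C a)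
  have hr0 : r ≠ 0 := hrmonic.ne_zero
  have hq0 : q ≠ 0 := by rintro rfl; simp [hq] at hp
  have hrroots : r.roots = p.roots := roots_multiset_prod_X_sub_C p.roots
  have hqroots : q.roots = 0 := by
    have h1 : p.roots = p.roots + q.roots := by
      conv_lhs => rw [hq]
      rw [roots_mul (hq ▸ hp), hrroots]
    have h2 : Multiset.card p.roots = Multiset.card p.roots + Multiset.card q.roots := by
      conv_lhs => rw [h1]
      simp
    exact Multiset.card_eq_zero.mp (by omega)
  have hqnoroot : ∀ x : ℝ, ¬ q.IsRoot x := by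
    intro x hx
    have : x ∈ q.roots := by rw [mem_roots hq0]; exact hx
    simp [hqroots] at this
  have heq : Even q.natDegree := even_natDegree_of_no_root q.natDegree q rfl hq0 hqnoroot
  have hrdeg : r.natDegree = Multiset.card p.roots := by
    rw [hr, natDegree_multiset_prod_of_monic _ (fun f hf => by
      obtain ⟨a, -, rfl⟩ := Multiset.mem_map.mp hf; exact monic_X_sub_C a)]
    simp [Multiset.map_map, Function.comp_def, natDegree_X_sub_C]
  have hpdeg : p.natDegree = Multiset.card p.roots + q.natDegree := by
    conv_lhs => rw [hq]
    rw [natDegree_mul hr0 hq0, hrdeg]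
  rcases heq with ⟨k, hk⟩
  rcases h with ⟨j, hj⟩
  exact ⟨j - k, by omega⟩

lemma exists_odd_rootMultiplicity (p : ℝ[X]) (hp : p ≠ 0) (h : Odd p.natDegree) :
    ∃ μ : ℝ, Odd (p.rootMultiplicity μ) := by
  have hcard : Odd (∑ μ ∈ p.roots.toFinset, p.roots.count μ) := by
    rw [Multiset.toFinset_sum_count_eq]
    exact odd_card_roots p hp h
  rw [Finset.odd_sum_iff_odd_card_odd] at hcard
  obtain ⟨μ, hμ⟩ := Finset.card_pos.mp hcard.pos
  rw [Finset.mem_filter] at hμ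
  have := hμ.2
  rw [count_roots] at this
  exact ⟨μ, this⟩

lemma matrix_charpoly_sub_smul_one {n : Type*} [DecidableEq n] [Fintype n]
    {R : Type*} [CommRing R] (A : Matrix n n R) (μ : R) :
    (A - μ • 1).charpoly = A.charpoly.comp (X + C μ) := by
  rw [Matrix.charpoly, Matrix.charpoly, ← coe_compRingHom_apply, RingHom.map_det]
  congr 1
  refine Matrix.ext fun i j => ?_
  by_cases h : i = j
  · subst h
    simp only [RingHom.mapMatrix_apply, Matrix.map_apply, Matrix.charmatrix_apply_eq,
      coe_compRingHom_apply, sub_comp, X_comp, C_comp, Matrix.sub_apply, Matrix.smul_apply,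
      Matrix.one_apply_eq, smul_eq_mul, mul_one, C_sub]
    ring
  · simp only [RingHom.mapMatrix_apply, Matrix.map_apply, Matrix.charmatrix_apply_ne _ _ _ h,
      coe_compRingHom_apply, neg_comp, C_comp, Matrix.sub_apply, Matrix.smul_apply,
      Matrix.one_apply_ne h, smul_eq_mul, mul_zero, sub_zero]

lemma end_charpoly_sub_smul_one {M : Type*} [AddCommGroup M] [Module ℝ M]
    [FiniteDimensional ℝ M] (φ : Module.End ℝ M) (μ : ℝ) :
    (φ - μ • 1).charpoly = φ.charpoly.comp (X + C μ) := by
  classical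
  let b := Module.finBasis ℝ M
  rw [← LinearMap.charpoly_toMatrix φ b, ← LinearMap.charpoly_toMatrix (φ - μ • 1) b,
    ← matrix_charpoly_sub_smul_one]
  congr 1
  rw [map_sub, map_smul, LinearMap.toMatrix_one]

lemma finrank_maxGenEigenspace_eq {M : Type*} [AddCommGroup M] [Module ℝ M]
    [FiniteDimensional ℝ M] (φ : Module.End ℝ M) (μ : ℝ) :
    finrank ℝ (φ.maxGenEigenspace μ) = φ.charpoly.rootMultiplicity μ := by
  have h1 : φ.maxGenEigenspace μ = (φ - μ • 1).maxGenEigenspace 0 := by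
    ext m
    simp [Module.End.mem_maxGenEigenspace]
  rw [h1, LinearMap.finrank_maxGenEigenspace_zero_eq, end_charpoly_sub_smul_one,
    rootMultiplicity_eq_natTrailingDegree]

lemma exists_odd_finrank_maxGenEigenspace {M : Type*} [AddCommGroup M] [Module ℝ M]
    [FiniteDimensional ℝ M] (φ : Module.End ℝ M) (h : Odd (finrank ℝ M)) :
    ∃ μ : ℝ, Odd (finrank ℝ (φ.maxGenEigenspace μ)) := by
  have hdeg : φ.charpoly.natDegree = finrank ℝ M := φ.charpoly_natDegree
  obtain ⟨μ, hμ⟩ := exists_odd_rootMultiplicity φ.charpoly φ.charpoly_monic.ne_zero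
    (by rwa [hdeg])
  exact ⟨μ, by rwa [finrank_maxGenEigenspace_eq]⟩



universe u v

attribute [local instance 100] LieRing.ofAssociativeRing

lemma key_eigenvector (k : ℕ) : ∀ (L : Type u) [LieRing L] [LieAlgebra ℝ L]
    [LieRing.IsNilpotent L]
    (M : Type v) [AddCommGroup M] [Module ℝ M] [LieRingModule L M] [LieModule ℝ L M]
    [FiniteDimensional ℝ M], finrank ℝ M = k → Odd k →
    ∃ m : M, m ≠ 0 ∧ ∀ x : L, ∃ c : ℝ, ⁅x, m⁆ = c • m := by
  induction k using Nat.strong_induction_on with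
  | _ k IH =>
  intro L _ _ _ M _ _ _ _ _ hk hodd
  by_cases H : ∀ x : L, ∃ μ : ℝ, (LieModule.toEnd ℝ L M x).maxGenEigenspace μ = ⊤
  · choose χ hχ using H
    have hnt : Nontrivial M := by
      have : 0 < finrank ℝ M := by rw [hk]; exact hodd.pos
      exact Module.nontrivial_of_finrank_pos this
    have htop : LieModule.genWeightSpace M χ = ⊤ := by
      rw [eq_top_iff]
      intro m _
      rw [LieModule.mem_genWeightSpace]
      intro x
      have : m ∈ (LieModule.toEnd ℝ L M x).maxGenEigenspace (χ x) := by
        rw [hχ x]; trivial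
      rwa [Module.End.mem_maxGenEigenspace] at this
    have hne : LieModule.genWeightSpace M χ ≠ ⊥ := by
      rw [htop]
      intro hbot
      obtain ⟨m₀, hm₀⟩ := exists_ne (0 : M)
      have : m₀ ∈ (⊥ : LieSubmodule ℝ L M) := hbot ▸ LieSubmodule.mem_top m₀
      exact hm₀ ((LieSubmodule.mem_bot _).mp this)
    obtain ⟨m, hm0, hm⟩ := LieModule.exists_forall_lie_eq_smul ℝ L M ⟨χ, hne⟩
    exact ⟨m, hm0, fun x => ⟨χ x, hm x⟩⟩
  · push_neg at H
    obtain ⟨x, hx⟩ := H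
    obtain ⟨μ, hμ⟩ := exists_odd_finrank_maxGenEigenspace (LieModule.toEnd ℝ L M x)
      (by rwa [hk])
    set N : LieSubmodule ℝ L M := LieModule.genWeightSpaceOf M μ x with hN
    have hcoe : (N : Submodule ℝ M) = (LieModule.toEnd ℝ L M x).maxGenEigenspace μ := rfl
    haveI : FiniteDimensional ℝ N := inferInstanceAs
      (FiniteDimensional ℝ ((LieModule.toEnd ℝ L M x).maxGenEigenspace μ))
    have hfr : finrank ℝ N = finrank ℝ ((LieModule.toEnd ℝ L M x).maxGenEigenspace μ) := rfl
    have hlt : finrank ℝ N < k := by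
      rw [← hk, hfr]
      exact Submodule.finrank_lt (hx μ)
    obtain ⟨m, hm0, hm⟩ := IH (finrank ℝ N) hlt L N rfl (by rw [hfr]; exact hμ)
    refine ⟨(m : M), by simpa using hm0, fun y => ?_⟩
    obtain ⟨c, hc⟩ := hm y
    exact ⟨c, by rw [← LieSubmodule.coe_bracket, hc, LieSubmodule.coe_smul]⟩

theorem stmt_11 {V : Type*} [AddCommGroup V] [Module ℝ V]
    [FiniteDimensional ℝ V]
    (g : LieSubalgebra ℝ (Module.End ℝ V))
    [LieRing.IsNilpotent g]
    {m : ℕ} (W : Fin m → Submodule ℝ V)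
    (hint : DirectSum.IsInternal W)
    (hinv : ∀ A ∈ g, ∀ i, ∀ x ∈ W i, A x ∈ W i) :
    (Finset.univ.filter fun i => Odd (Module.finrank ℝ (W i))).card ≤
      Module.finrank ℝ (Submodule.span ℝ
        {u : V | u ≠ 0 ∧ ∀ A ∈ g, ∃ c : ℝ, A u = c • u}) := by
  classical
  set S : Set V := {u : V | u ≠ 0 ∧ ∀ A ∈ g, ∃ c : ℝ, A u = c • u} with hS
  set t : Finset (Fin m) := Finset.univ.filter fun i => Odd (Module.finrank ℝ (W i)) with ht
  have key : ∀ i : {i : Fin m // i ∈ t}, ∃ u : V, u ∈ W i.1 ∧ u ≠ 0 ∧ u ∈ S := by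
    rintro ⟨i, hi⟩
    rw [ht, Finset.mem_filter] at hi
    have hodd : Odd (finrank ℝ (W i)) := hi.2
    -- make W i a Lie submodule over g
    let N : LieSubmodule ℝ g V :=
      { W i with
        lie_mem := fun {x v} hv => hinv x.1 x.2 i v hv }
    have hNcoe : (N : Submodule ℝ V) = W i := rfl
    haveI : FiniteDimensional ℝ N := inferInstanceAs (FiniteDimensional ℝ (W i))
    have hfr : finrank ℝ N = finrank ℝ (W i) := rfl
    obtain ⟨u, hu0, hu⟩ := key_eigenvector (finrank ℝ N) g N rfl (by rw [hfr]; exact hodd)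
    refine ⟨(u : V), u.2, by simpa using hu0, ?_⟩
    refine ⟨by simpa using hu0, fun A hA => ?_⟩
    obtain ⟨c, hc⟩ := hu ⟨A, hA⟩
    refine ⟨c, ?_⟩
    have h := congrArg (Subtype.val) hc
    rw [LieSubmodule.coe_bracket, LieSubmodule.coe_smul] at h
    exact h
  choose u hu₁ hu₂ hu₃ using key
  have hind : LinearIndependent ℝ u := by
    have h1 : iSupIndep W := hint.submodule_iSupIndep
    have h2 : iSupIndep (fun i : {i : Fin m // i ∈ t} => W i.1) :=
      h1.comp Subtype.val_injective
    exact h2.linearIndependent _ hu₁ hu₂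
  have hmem : ∀ i, u i ∈ Submodule.span ℝ S := fun i => Submodule.subset_span (hu₃ i)
  let v : {i : Fin m // i ∈ t} → Submodule.span ℝ S := fun i => ⟨u i, hmem i⟩
  have hindv : LinearIndependent ℝ v := by
    have : u = (Submodule.span ℝ S).subtype ∘ v := rfl
    rw [this] at hind
    exact hind.of_comp _
  have := hindv.fintype_card_le_finrank
  simpa [Fintype.card_coe] using this
end
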